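/- For n ≥ 0 and r ≥ 1, the higher-order Carlitz degenerate Euler polynomials satisfy ℰ^{(r)}_{n,λ}(x) = ∑_{l=0}^n C(r+l-1, l) 2^{-l} (-1)^l l! S_{2,λ}(n,l|x). -/

import Mathlib

open Finset PowerSeries

/-- The λ-binomial coefficient `binom_λ(y,n) = y(y-λ)⋯(y-(n-1)λ)/n!`. -/
noncomputable def dbinom (lam y : ℝ) (n : ℕ) : ℝ :=
  (∏ i ∈ range n, (y - i * lam)) / n.factorial

/-- `(1 + λt)^{y/λ}` as a formal power series: `∑_n binom_λ(y,n) t^n`. -/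
noncomputable def degExp (lam y : ℝ) : PowerSeries ℝ :=
  PowerSeries.mk fun n => dbinom lam y n

/-- Auxiliary coefficients for the negative binomial expansion of `(1+u/2)^{-r}`. -/
noncomputable def bb (r l : ℕ) : ℝ := ((r + l - 1).choose l : ℝ) * (-2⁻¹ : ℝ) ^ l

lemma bb_scalar (r i : ℕ) : 2 * bb (r+1) (i+1) + bb (r+1) i = 2 * bb r (i+1) := by
  unfold bb
  have h1 : r + 1 + (i + 1) - 1 = (r + i) + 1 := by omega
  have h2 : r + 1 + i - 1 = r + i := by omega
  have h3 : r + (i + 1) - 1 = r + i := by omega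
  rw [h1, h2, h3, Nat.choose_succ_succ (r+i) i]
  push_cast
  ring

lemma telescope (u : PowerSeries ℝ) (N r : ℕ) :
    (2 + u) * (∑ l ∈ range (N+1), PowerSeries.C (bb (r+1) l) * u ^ l)
      = 2 * (∑ l ∈ range (N+1), PowerSeries.C (bb r l) * u ^ l)
        + PowerSeries.C (bb (r+1) N) * u ^ (N+1) := by
  rw [add_mul]
  simp only [Finset.mul_sum]
  rw [Finset.sum_congr rfl (fun l _ => by ring :
    ∀ l ∈ range (N+1), u * (PowerSeries.C (bb (r+1) l) * u ^ l)
      = PowerSeries.C (bb (r+1) l) * u ^ (l+1))]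
  rw [Finset.sum_range_succ (fun l => PowerSeries.C (bb (r+1) l) * u ^ (l+1)) N]
  rw [Finset.sum_range_succ' (fun l => 2 * (PowerSeries.C (bb (r+1) l) * u ^ l)) N]
  rw [Finset.sum_range_succ' (fun l => 2 * (PowerSeries.C (bb r l) * u ^ l)) N]
  have hb0 : bb (r+1) 0 = bb r 0 := by simp [bb]
  have hterm : ∀ i ∈ range N,
      2 * (PowerSeries.C (bb (r+1) (i+1)) * u ^ (i+1)) + PowerSeries.C (bb (r+1) i) * u ^ (i+1)
        = 2 * (PowerSeries.C (bb r (i+1)) * u ^ (i+1)) := by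
    intro i _
    have hC : PowerSeries.C (2 * bb (r+1) (i+1) + bb (r+1) i)
        = PowerSeries.C (2 * bb r (i+1)) := by rw [bb_scalar]
    simp only [map_add, map_mul, map_ofNat] at hC
    linear_combination u ^ (i+1) * hC
  rw [← Finset.sum_congr rfl hterm, Finset.sum_add_distrib, hb0]
  ring

lemma key (u : PowerSeries ℝ) (N : ℕ) :
    ∀ r : ℕ, ∃ D : PowerSeries ℝ,
      (2 + u) ^ r * (∑ l ∈ range (N+1), PowerSeries.C (bb r l) * u ^ l)
        = PowerSeries.C ((2:ℝ) ^ r) + u ^ (N+1) * D := by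
  intro r
  induction r with
  | zero =>
    refine ⟨0, ?_⟩
    have : ∀ l ∈ range (N+1), PowerSeries.C (bb 0 l) * u ^ l
        = if l = 0 then 1 else 0 := by
      intro l _
      rcases l with _ | l
      · simp [bb]
      · simp [bb, Nat.choose_eq_zero_of_lt (Nat.lt_succ_self l)]
    rw [Finset.sum_congr rfl this,
      Finset.sum_ite_eq' (range (N+1)) 0 (fun _ => (1:PowerSeries ℝ))]
    simp
  | succ r ih =>
    obtain ⟨D, hD⟩ := ih
    refine ⟨2 * D + PowerSeries.C (bb (r+1) N) * (2+u) ^ r, ?_⟩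
    have hC : PowerSeries.C ((2:ℝ)^(r+1)) = 2 * PowerSeries.C ((2:ℝ)^r) := by
      rw [pow_succ, mul_comm, map_mul, map_ofNat]
    linear_combination (2+u)^r * telescope u N r + 2 * hD - hC

lemma coeff_pow_lt (u : PowerSeries ℝ) (hu : PowerSeries.constantCoeff u = 0) :
    ∀ l k : ℕ, k < l → PowerSeries.coeff k (u ^ l) = 0 := by
  intro l
  induction l with
  | zero => intro k hk; omega
  | succ l ih =>
    intro k hk
    rw [pow_succ, PowerSeries.coeff_mul]
    apply Finset.sum_eq_zero
    intro p hp
    rw [Finset.HasAntidiagonal.mem_antidiagonal] at hp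
    by_cases h2 : p.2 = 0
    · rw [h2]
      simp [hu]
    · rw [ih p.1 (by omega)]
      exact zero_mul _

lemma coeff_pow_mul_lt (u f : PowerSeries ℝ) (hu : PowerSeries.constantCoeff u = 0)
    {k l : ℕ} (h : k < l) : PowerSeries.coeff k (u ^ l * f) = 0 := by
  rw [PowerSeries.coeff_mul]
  apply Finset.sum_eq_zero
  intro p hp
  rw [Finset.HasAntidiagonal.mem_antidiagonal] at hp
  rw [coeff_pow_lt u hu l p.1 (by omega), zero_mul]

/-- If `E` gives the higher-order Carlitz degenerate Euler polynomials at `x`, i.e.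
`(2/((1+λt)^{1/λ}+1))^r (1+λt)^{x/λ} = ∑_n E_n t^n/n!`, and `S n l` are the degenerate
Stirling polynomials of the second kind at `x`, i.e.
`(1/l!)(1+λt)^{x/λ}((1+λt)^{1/λ}-1)^l = ∑_n S(n,l) t^n/n!`, then for `r ≥ 1` and `n ≥ 0`:
`E_n = ∑_{l=0}^n C(r+l-1,l) 2^{-l} (-1)^l l! S(n,l)`. -/
theorem stmt8 (lam x : ℝ) (hlam : lam ≠ 0) (r : ℕ) (hr : 1 ≤ r)
    (E : ℕ → ℝ) (S : ℕ → ℕ → ℝ)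
    (hE : ((degExp lam 1 + 1) ^ r) * PowerSeries.mk (fun n => E n / n.factorial) =
      ((2 : ℝ) ^ r) • degExp lam x)
    (hS : ∀ l : ℕ, degExp lam x * (degExp lam 1 - 1) ^ l =
      (l.factorial : ℝ) • PowerSeries.mk (fun n => S n l / n.factorial)) :
    ∀ n : ℕ, E n =
      ∑ l ∈ range (n + 1),
        ((r + l - 1).choose l : ℝ) * ((2 : ℝ)⁻¹) ^ l * (-1) ^ l * (l.factorial : ℝ) *
          S n l := by
  set u : PowerSeries ℝ := degExp lam 1 - 1 with hu_def
  have hg0 : PowerSeries.constantCoeff (degExp lam 1) = 1 := by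
    rw [← PowerSeries.coeff_zero_eq_constantCoeff]
    simp [degExp, dbinom]
  have hu0 : PowerSeries.constantCoeff u = 0 := by
    rw [hu_def, map_sub, hg0, map_one, sub_self]
  have hg1 : degExp lam 1 + 1 = 2 + u := by rw [hu_def]; ring
  -- coefficients of degExp x * u^l, from hS
  have hcoeffS : ∀ l m : ℕ, PowerSeries.coeff m (degExp lam x * u ^ l)
      = (l.factorial : ℝ) * S m l / m.factorial := by
    intro l m
    rw [hu_def, hS l, map_smul, PowerSeries.coeff_mk, smul_eq_mul, mul_div_assoc]
  -- the candidate series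
  set T : PowerSeries ℝ := PowerSeries.mk
    (fun m => ∑ l ∈ range (m+1), bb r l * PowerSeries.coeff m (degExp lam x * u ^ l))
    with hT_def
  -- main power series identity
  have main : (2 + u) ^ r * T = PowerSeries.C ((2:ℝ)^r) * degExp lam x := by
    apply PowerSeries.ext
    intro n
    obtain ⟨D, hD⟩ := key u n r
    set Q : PowerSeries ℝ :=
      degExp lam x * ∑ l ∈ range (n+1), PowerSeries.C (bb r l) * u ^ l with hQ_def
    have hTQ : ∀ j ≤ n, PowerSeries.coeff j T = PowerSeries.coeff j Q := by
      intro j hj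
      have hQc : PowerSeries.coeff j Q
          = ∑ l ∈ range (n+1), bb r l * PowerSeries.coeff j (degExp lam x * u ^ l) := by
        rw [hQ_def, Finset.mul_sum, map_sum]
        refine Finset.sum_congr rfl fun l _ => ?_
        rw [mul_left_comm, PowerSeries.coeff_C_mul]
      rw [hQc, hT_def, PowerSeries.coeff_mk]
      apply Finset.sum_subset
      · exact Finset.range_subset_range.mpr (by omega)
      · intro l hl hlj
        rw [Finset.mem_range] at hl hlj
        rw [mul_comm (degExp lam x), coeff_pow_mul_lt u _ hu0 (by omega), mul_zero]
    have h1 : PowerSeries.coeff n ((2 + u) ^ r * T)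
        = PowerSeries.coeff n ((2 + u) ^ r * Q) := by
      rw [PowerSeries.coeff_mul, PowerSeries.coeff_mul]
      refine Finset.sum_congr rfl fun p hp => ?_
      rw [Finset.HasAntidiagonal.mem_antidiagonal] at hp
      rw [hTQ p.2 (by omega)]
    have h2 : (2 + u) ^ r * Q
        = PowerSeries.C ((2:ℝ)^r) * degExp lam x + u ^ (n+1) * (D * degExp lam x) := by
      rw [hQ_def]
      linear_combination (degExp lam x) * hD
    rw [h1, h2, map_add, coeff_pow_mul_lt u _ hu0 (Nat.lt_succ_self n), add_zero]
  -- cancel the unit (2+u)^r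
  have hne : (degExp lam 1 + 1) ^ r ≠ 0 := by
    intro h0
    have h1 := congrArg (PowerSeries.constantCoeff) h0
    rw [map_pow, map_add, hg0, map_one, map_zero] at h1
    norm_num at h1
  have hmain' : ((degExp lam 1 + 1) ^ r) * T = ((2 : ℝ) ^ r) • degExp lam x := by
    rw [hg1, main, PowerSeries.smul_eq_C_mul]
  have hFT : PowerSeries.mk (fun n => E n / n.factorial) = T :=
    mul_left_cancel₀ hne (hE.trans hmain'.symm)
  -- extract coefficients
  intro n
  have hnf : (n.factorial : ℝ) ≠ 0 := Nat.cast_ne_zero.mpr n.factorial_ne_zero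
  have hEn : E n / n.factorial
      = ∑ l ∈ range (n+1), bb r l * ((l.factorial : ℝ) * S n l / n.factorial) := by
    have hn := congrArg (PowerSeries.coeff n) hFT
    rw [hT_def] at hn
    simp only [PowerSeries.coeff_mk] at hn
    rw [hn]
    exact Finset.sum_congr rfl fun l _ => by rw [hcoeffS l n]
  have hE2 : E n
      = (∑ l ∈ range (n+1), bb r l * ((l.factorial : ℝ) * S n l / n.factorial))
        * n.factorial := by
    rw [← hEn, div_mul_cancel₀ _ hnf]
  rw [hE2, Finset.sum_mul]
  refine Finset.sum_congr rfl fun l _ => ?_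
  have hneg : (-2⁻¹ : ℝ) ^ l = (-1:ℝ)^l * (2⁻¹)^l := by
    rw [← neg_one_mul, mul_pow]
  simp only [bb, hneg]
  field_simp
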